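/- arXiv:2409.18906 — 11 statements merged into one kernel-verified Lean document; each statement's English description precedes it below -/
import Mathlib

section
/- Let a and b be distinct positive integers. There exists a complex number α with α^(b-a) = 1 and α^a + 1 = 0 if and only if the 2-adic valuations of a and b are equal. -/
lemma key (n a : ℕ) (ha : 0 < a) (hdvd : n ∣ 2 * a) (hnd : ¬ n ∣ a) :
    n.factorization 2 = a.factorization 2 + 1 := by
  have hn : n ≠ 0 := by
    rintro rfl
    have := Nat.eq_zero_of_zero_dvd hdvd
    omega
  set e := n.factorization 2 with he
  set m := n / 2 ^ e with hm
  have hnm : 2 ^ e * m = n := Nat.ordProj_mul_ordCompl_eq_self n 2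
  have hcop : Nat.Coprime 2 m := Nat.coprime_ordCompl Nat.prime_two hn
  have hma : m ∣ a := by
    have : m ∣ 2 * a := dvd_trans (Nat.ordCompl_dvd n 2) hdvd
    exact (hcop.symm).dvd_of_dvd_mul_left this
  have h2a : (2 * a).factorization 2 = a.factorization 2 + 1 := by
    rw [Nat.factorization_mul (by norm_num) ha.ne']
    simp [Nat.Prime.factorization Nat.prime_two]
    ring
  have hle : e ≤ a.factorization 2 + 1 := by
    have h1 : (2:ℕ) ^ e ∣ 2 * a := dvd_trans (Nat.ordProj_dvd n 2) hdvd
    have := (Nat.Prime.pow_dvd_iff_le_factorization Nat.prime_two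
      (by positivity : 2 * a ≠ 0)).mp h1
    omega
  have hgt : a.factorization 2 < e := by
    by_contra hc
    push_neg at hc
    have h2e : (2:ℕ) ^ e ∣ a :=
      (Nat.Prime.pow_dvd_iff_le_factorization Nat.prime_two ha.ne').mpr hc
    have : n ∣ a := hnm ▸ (hcop.pow_left e).mul_dvd_of_dvd_of_dvd h2e hma
    exact hnd this
  omega

theorem stmt_0 (a b : ℕ) (ha : 0 < a) (hb : 0 < b) (hab : a ≠ b) :
    (∃ α : ℂ, α ^ ((b : ℤ) - (a : ℤ)) = 1 ∧ α ^ a + 1 = 0) ↔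
      padicValNat 2 a = padicValNat 2 b := by
  rw [← Nat.factorization_def a Nat.prime_two, ← Nat.factorization_def b Nat.prime_two]
  constructor
  · rintro ⟨α, h1, h2⟩
    have ha2 : α ^ a = -1 := eq_neg_of_add_eq_zero_left h2
    have hα : α ≠ 0 := by
      rintro rfl
      rw [zero_pow ha.ne'] at ha2
      exact absurd ha2.symm (by norm_num)
    have hb2 : α ^ b = -1 := by
      rw [zpow_sub₀ hα, zpow_natCast, zpow_natCast, div_eq_one_iff_eq
        (by rw [ha2]; norm_num)] at h1
      rw [h1, ha2]
    have hpa : α ^ (2 * a) = 1 := by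
      rw [mul_comm, pow_mul, ha2]; norm_num
    have hpb : α ^ (2 * b) = 1 := by
      rw [mul_comm, pow_mul, hb2]; norm_num
    have hda : ¬ orderOf α ∣ a := by
      intro h
      rw [orderOf_dvd_iff_pow_eq_one.mp h] at ha2
      exact absurd ha2 (by norm_num)
    have hdb : ¬ orderOf α ∣ b := by
      intro h
      rw [orderOf_dvd_iff_pow_eq_one.mp h] at hb2
      exact absurd hb2 (by norm_num)
    have k1 := key (orderOf α) a ha (orderOf_dvd_of_pow_eq_one hpa) hda
    have k2 := key (orderOf α) b hb (orderOf_dvd_of_pow_eq_one hpb) hdb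
    omega
  · intro h
    set k := a.factorization 2 with hk
    set α := Complex.exp (↑Real.pi * Complex.I / 2 ^ k) with hα
    have hαne : α ≠ 0 := Complex.exp_ne_zero _
    have hpow : α ^ ((2:ℕ) ^ k) = -1 := by
      rw [hα, ← Complex.exp_nat_mul]
      have h2k : ((2:ℂ) ^ k) ≠ 0 := pow_ne_zero _ two_ne_zero
      rw [show ((2^k : ℕ) : ℂ) * (↑Real.pi * Complex.I / 2 ^ k) = ↑Real.pi * Complex.I by
        push_cast; field_simp]
      exact Complex.exp_pi_mul_I
    have hgen : ∀ c : ℕ, 0 < c → c.factorization 2 = k → α ^ c = -1 := by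
      intro c hc hck
      have hdecomp : 2 ^ k * (c / 2 ^ k) = c := by
        rw [← hck]; exact Nat.ordProj_mul_ordCompl_eq_self c 2
      have hodd : Odd (c / 2 ^ k) := by
        rw [Nat.odd_iff, ← Nat.two_dvd_ne_zero, ← hck]
        exact Nat.not_dvd_ordCompl Nat.prime_two hc.ne'
      calc α ^ c = (α ^ (2^k : ℕ)) ^ (c / 2 ^ k) := by rw [← pow_mul, hdecomp]
        _ = -1 := by rw [hpow, hodd.neg_one_pow]
    have hac : α ^ a = -1 := hgen a ha rfl
    have hbc : α ^ b = -1 := hgen b hb h.symm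
    refine ⟨α, ?_, by rw [hac]; ring⟩
    rw [zpow_sub₀ hαne, zpow_natCast, zpow_natCast, hac, hbc]
    norm_num
end

section
/- Let a and b be distinct positive integers. There exist complex numbers α and β with α^(b-a) = 1 = β^(b-a) and α^a + β^a + 1 = 0 if and only if ν_3(a) = ν_3(b) < ν_3(b-a). -/
open Complex Real

private lemma val_eq_of_dvd_not_dvd {p s b : ℕ} [Fact p.Prime] (hb : b ≠ 0)
    (h1 : p ^ s ∣ b) (h2 : ¬ p ^ (s + 1) ∣ b) : padicValNat p b = s := by
  have l1 := (padicValNat_dvd_iff_le (p := p) hb).mp h1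
  have l2 : ¬ (s + 1 ≤ padicValNat p b) := fun h => h2 ((padicValNat_dvd_iff_le hb).mpr h)
  omega

private lemma sum_lemma {x y : ℂ} (hx : ‖x‖ = 1) (hy : ‖y‖ = 1)
    (h : x + y + 1 = 0) : x ^ 2 + x + 1 = 0 := by
  have e1 : x * (starRingEnd ℂ) x = 1 := by
    rw [Complex.mul_conj, ← Complex.sq_norm, hx]; norm_num
  have e2 : y * (starRingEnd ℂ) y = 1 := by
    rw [Complex.mul_conj, ← Complex.sq_norm, hy]; norm_num
  have e4 : (starRingEnd ℂ) x + (starRingEnd ℂ) y + 1 = 0 := by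
    have := congrArg (starRingEnd ℂ) h
    simpa using this
  linear_combination x * e2 + (x * (1 + x)) * e4 - (x * ((starRingEnd ℂ) y)) * h - (x + 1) * e1

private lemma zpow_one_of {α : ℂ} {z : ℤ} (h : α ^ z.natAbs = 1) : α ^ z = 1 := by
  rcases Int.natAbs_eq z with hh | hh
  · rw [hh, zpow_natCast, h]
  · rw [hh, zpow_neg, zpow_natCast, h, inv_one]

private lemma pow_natAbs_of_zpow {α : ℂ} {z : ℤ} (h : α ^ z = 1) : α ^ z.natAbs = 1 := by
  rcases Int.natAbs_eq z with hh | hh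
  · rw [hh, zpow_natCast] at h; exact h
  · rw [hh, zpow_neg, zpow_natCast, inv_eq_one] at h; exact h

theorem stmt_1 (a b : ℕ) (ha : 0 < a) (hb : 0 < b) (hab : a ≠ b) :
    (∃ α β : ℂ, α ^ ((b : ℤ) - (a : ℤ)) = 1 ∧ β ^ ((b : ℤ) - (a : ℤ)) = 1 ∧
      α ^ a + β ^ a + 1 = 0) ↔
      (padicValNat 3 a = padicValNat 3 b ∧
        padicValNat 3 b < padicValInt 3 ((b : ℤ) - (a : ℤ))) := by
  haveI : Fact (Nat.Prime 3) := ⟨by norm_num⟩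
  set z : ℤ := (b : ℤ) - (a : ℤ) with hz
  set n : ℕ := z.natAbs with hn
  have hzne : z ≠ 0 := sub_ne_zero.mpr (by exact_mod_cast (Ne.symm hab))
  have hnne : n ≠ 0 := Int.natAbs_ne_zero.mpr hzne
  have hvalint : padicValInt 3 z = padicValNat 3 n := rfl
  constructor
  · rintro ⟨α, β, hα, hβ, hsum⟩
    have hα0 : α ≠ 0 := by
      rintro rfl
      rw [zero_zpow z hzne] at hα; exact zero_ne_one hα
    have hαn : α ^ n = 1 := pow_natAbs_of_zpow hα
    have hβn : β ^ n = 1 := pow_natAbs_of_zpow hβ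
    have habs : ‖α‖ = 1 := by
      have h1 : ‖α‖ ^ n = 1 := by rw [← norm_pow, hαn, norm_one]
      rcases (pow_eq_one_iff_of_ne_zero hnne).mp h1 with h | ⟨h, _⟩
      · exact h
      · have := norm_nonneg α; rw [h] at this; linarith
    have habsβ : ‖β‖ = 1 := by
      have h1 : ‖β‖ ^ n = 1 := by rw [← norm_pow, hβn, norm_one]
      rcases (pow_eq_one_iff_of_ne_zero hnne).mp h1 with h | ⟨h, _⟩
      · exact h
      · have := norm_nonneg β; rw [h] at this; linarith
    set x : ℂ := α ^ a with hxdef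
    have habsx : ‖x‖ = 1 := by rw [hxdef, norm_pow, habs, one_pow]
    have habsy : ‖β ^ a‖ = 1 := by rw [norm_pow, habsβ, one_pow]
    have hq : x ^ 2 + x + 1 = 0 := sum_lemma habsx habsy hsum
    have hx3 : x ^ 3 = 1 := by linear_combination (x - 1) * hq
    have hx1 : x ≠ 1 := by
      rintro h1; rw [h1] at hq; norm_num at hq
    have hdn : orderOf α ∣ n := orderOf_dvd_of_pow_eq_one hαn
    have hd0 : orderOf α ≠ 0 := by
      rintro h; rw [h] at hdn; exact hnne (zero_dvd_iff.mp hdn)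
    have hox : orderOf x = 3 := orderOf_eq_prime hx3 hx1
    have hop : orderOf (α ^ a) = orderOf α / Nat.gcd (orderOf α) a := orderOf_pow' α ha.ne'
    set d := orderOf α
    set g := Nat.gcd d a with hgdef
    have hdg : d / g = 3 := by rw [← hop]; exact hox
    have hgd : g ∣ d := Nat.gcd_dvd_left d a
    have hg0 : g ≠ 0 := fun h => hd0 (Nat.eq_zero_of_gcd_eq_zero_left h)
    have hd3g : d = 3 * g := by
      have h5 := Nat.div_mul_cancel hgd
      rw [hdg] at h5
      omega
    have hνd : padicValNat 3 d = padicValNat 3 g + 1 := by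
      rw [hd3g, padicValNat.mul (by norm_num) hg0, padicValNat_self]
      omega
    have hlt : padicValNat 3 a < padicValNat 3 d := by
      by_contra hle
      push_neg at hle
      have h1 : 3 ^ padicValNat 3 d ∣ a := (padicValNat_dvd_iff_le ha.ne').mpr hle
      have h2 : (3 : ℕ) ^ padicValNat 3 d ∣ d := pow_padicValNat_dvd
      have h3 : 3 ^ padicValNat 3 d ∣ g := Nat.dvd_gcd h2 h1
      have h4 := (padicValNat_dvd_iff_le hg0).mp h3
      omega
    have hdleqn : padicValNat 3 d ≤ padicValNat 3 n := by
      have h2 : (3 : ℕ) ^ padicValNat 3 d ∣ n := dvd_trans pow_padicValNat_dvd hdn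
      exact (padicValNat_dvd_iff_le hnne).mp h2
    have hsn : padicValNat 3 a < padicValNat 3 n := lt_of_lt_of_le hlt hdleqn
    set s := padicValNat 3 a with hsdef
    have h3sa : (3 : ℕ) ^ s ∣ a := pow_padicValNat_dvd
    have hnots : ¬ (3 : ℕ) ^ (s + 1) ∣ a := pow_succ_padicValNat_not_dvd ha.ne'
    have h3n : (3 : ℕ) ^ (s + 1) ∣ n := (padicValNat_dvd_iff_le hnne).mpr hsn
    have hzdvd : (3 : ℤ) ^ (s + 1) ∣ z := by
      have h1 : ((3 ^ (s + 1) : ℕ) : ℤ) ∣ ((n : ℕ) : ℤ) := Int.natCast_dvd_natCast.mpr h3n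
      have h2 : ((3 ^ (s + 1) : ℕ) : ℤ) ∣ z := Int.dvd_natAbs.mp h1
      exact_mod_cast h2
    have hb_dvd : (3 : ℤ) ^ s ∣ (b : ℤ) := by
      have h1 : (3 : ℤ) ^ s ∣ (a : ℤ) := by exact_mod_cast Int.natCast_dvd_natCast.mpr h3sa
      have h2 : (3 : ℤ) ^ s ∣ z := dvd_trans (pow_dvd_pow 3 (by omega)) hzdvd
      have h3 : (b : ℤ) = (a : ℤ) + z := by rw [hz]; ring
      rw [h3]; exact dvd_add h1 h2
    have hbs : (3 : ℕ) ^ s ∣ b := by exact_mod_cast hb_dvd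
    have hbnot : ¬ (3 : ℕ) ^ (s + 1) ∣ b := by
      intro hcon
      apply hnots
      have h1 : (3 : ℤ) ^ (s + 1) ∣ (b : ℤ) := by exact_mod_cast hcon
      have h2 : (3 : ℤ) ^ (s + 1) ∣ (a : ℤ) := by
        have h3 : (a : ℤ) = (b : ℤ) - z := by rw [hz]; ring
        rw [h3]; exact dvd_sub h1 hzdvd
      exact_mod_cast h2
    have hvb : padicValNat 3 b = s := val_eq_of_dvd_not_dvd hb.ne' hbs hbnot
    refine ⟨hvb.symm, ?_⟩
    rw [hvb, hvalint]; exact hsn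
  · rintro ⟨h1, h2⟩
    rw [hvalint] at h2
    have hsn : padicValNat 3 a < padicValNat 3 n := lt_of_le_of_lt (le_of_eq h1) h2
    set s := padicValNat 3 a with hsdef
    have hfd : a.factorization 3 = s := Nat.factorization_def a (by norm_num)
    have ha' : ¬ (3 : ℕ) ∣ (a / 3 ^ s) := by
      have := Nat.not_dvd_ordCompl (by norm_num : Nat.Prime 3) ha.ne'
      rwa [hfd] at this
    have hfa : 3 ^ s * (a / 3 ^ s) = a := by
      have := Nat.ordProj_mul_ordCompl_eq_self a 3
      rwa [hfd] at this
    set a' := a / 3 ^ s with ha'def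
    have h3n : (3 : ℕ) ^ (s + 1) ∣ n := (padicValNat_dvd_iff_le hnne).mpr hsn
    obtain ⟨m, hm⟩ := h3n
    set α : ℂ := Complex.exp (2 * π * Complex.I / (3 : ℂ) ^ (s + 1)) with hαdef
    set x : ℂ := Complex.exp (2 * π * Complex.I * (a' : ℂ) / 3) with hxdef
    have h3c : ((3 : ℂ) ^ (s + 1)) ≠ 0 := pow_ne_zero _ (by norm_num)
    have hxa : α ^ a = x := by
      rw [hαdef, ← Complex.exp_nat_mul, hxdef]
      congr 1
      have hca : (a : ℂ) = 3 ^ s * (a' : ℂ) := by exact_mod_cast hfa.symm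
      rw [hca]
      field_simp
      ring
    have hαn : α ^ n = 1 := by
      rw [hαdef, ← Complex.exp_nat_mul]
      have hc : ((n : ℕ) : ℂ) * (2 * π * Complex.I / (3 : ℂ) ^ (s + 1)) =
          (m : ℕ) * (2 * π * Complex.I) := by
        have hcn : ((n : ℕ) : ℂ) = (3 : ℂ) ^ (s + 1) * (m : ℂ) := by exact_mod_cast hm
        rw [hcn]; field_simp
      rw [hc, Complex.exp_nat_mul_two_pi_mul_I]
    have hx3 : x ^ 3 = 1 := by
      rw [hxdef, ← Complex.exp_nat_mul]
      have hc : ((3 : ℕ) : ℂ) * (2 * π * Complex.I * (a' : ℂ) / 3) =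
          (a' : ℕ) * (2 * π * Complex.I) := by push_cast; field_simp
      rw [hc, Complex.exp_nat_mul_two_pi_mul_I]
    have hx1 : x ≠ 1 := by
      intro hcon
      rw [hxdef, Complex.exp_eq_one_iff] at hcon
      obtain ⟨k, hk⟩ := hcon
      apply ha'
      have key : (2 * π * Complex.I) * (a' : ℂ) = (2 * π * Complex.I) * (3 * k) := by
        linear_combination 3 * hk
      have hc : (a' : ℂ) = 3 * k := mul_left_cancel₀ Complex.two_pi_I_ne_zero key
      have hz2 : ((a' : ℕ) : ℤ) = 3 * k := by exact_mod_cast hc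
      have : (3 : ℤ) ∣ ((a' : ℕ) : ℤ) := ⟨k, hz2⟩
      exact_mod_cast this
    have hq : x ^ 2 + x + 1 = 0 := by
      have hfac : (x - 1) * (x ^ 2 + x + 1) = 0 := by linear_combination hx3
      rcases mul_eq_zero.mp hfac with h | h
      · exact absurd (sub_eq_zero.mp h) hx1
      · exact h
    have hxinv : x⁻¹ = x ^ 2 := inv_eq_of_mul_eq_one_right (by
      rw [show x * x ^ 2 = x ^ 3 by ring, hx3])
    refine ⟨α, α⁻¹, ?_, ?_, ?_⟩
    · exact zpow_one_of hαn
    · rw [inv_zpow, zpow_one_of hαn, inv_one]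
    · rw [hxa, inv_pow, hxa, hxinv]
      linear_combination hq
end

section
/- Let a and b be distinct positive integers. There exist complex numbers α, β, γ with α^(b-a) = β^(b-a) = γ^(b-a) = 1 and α^a + β^a + γ^a + 1 = 0 if and only if ν_2(a) = ν_2(b). -/
open Complex

private lemma factor_lemma (x y z : ℂ) (hx : x * (starRingEnd ℂ) x = 1)
    (hy : y * (starRingEnd ℂ) y = 1) (hz : z * (starRingEnd ℂ) z = 1)
    (hsum : x + y + z + 1 = 0) : x = -1 ∨ y = -1 ∨ z = -1 := by
  have hc : (starRingEnd ℂ) x + (starRingEnd ℂ) y + (starRingEnd ℂ) z + 1 = 0 := by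
    have := congrArg (starRingEnd ℂ) hsum
    simpa using this
  have h0 : (x + 1) * (y + 1) * (z + 1) = 0 := by
    linear_combination x * y * z * hc + hsum - x * y * hz - y * z * hx - z * x * hy
  rcases mul_eq_zero.mp h0 with h | h
  · rcases mul_eq_zero.mp h with h | h
    · left; exact eq_neg_of_add_eq_zero_left h
    · right; left
      exact eq_neg_of_add_eq_zero_left h
  · right; right
    exact eq_neg_of_add_eq_zero_left h

private lemma val_eq_of_dvd_sub (a b : ℕ) (ha : 0 < a) (hb : 0 < b)
    (hd : (2 : ℤ) ^ (padicValNat 2 a + 1) ∣ (b : ℤ) - (a : ℤ)) :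
    padicValNat 2 b = padicValNat 2 a := by
  set v := padicValNat 2 a with hv
  have hva : (2 : ℕ) ^ v ∣ a := pow_padicValNat_dvd
  have hna : ¬ (2 : ℕ) ^ (v + 1) ∣ a := pow_succ_padicValNat_not_dvd ha.ne'
  have hvb : (2 : ℕ) ^ v ∣ b := by
    have h1 : (2 : ℤ) ^ v ∣ (b : ℤ) - a := dvd_trans (pow_dvd_pow 2 (Nat.le_succ v)) hd
    have h2 : (2 : ℤ) ^ v ∣ (b : ℤ) := by
      have : (b : ℤ) = ((b : ℤ) - a) + a := by ring
      rw [this]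
      exact dvd_add h1 (by exact_mod_cast hva)
    exact_mod_cast h2
  have hnb : ¬ (2 : ℕ) ^ (v + 1) ∣ b := by
    intro h
    apply hna
    have h2 : (2 : ℤ) ^ (v + 1) ∣ (a : ℤ) := by
      have : (a : ℤ) = (b : ℤ) - ((b : ℤ) - a) := by ring
      rw [this]
      exact dvd_sub (by exact_mod_cast h) hd
    exact_mod_cast h2
  have h1 : v ≤ padicValNat 2 b := by
    rw [← padicValNat_dvd_iff_le hb.ne']
    exact hvb
  have h2 : padicValNat 2 b ≤ v := by
    by_contra hlt
    exact hnb ((padicValNat_dvd_iff_le hb.ne').mpr (Nat.succ_le_of_lt (not_le.mp hlt)))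
  omega

private lemma forward_lemma (a b n : ℕ) (ha : 0 < a) (hb : 0 < b) (hn : 0 < n)
    (hnab : ((n : ℤ)) = |(b : ℤ) - a|) (ζ : ℂ) (hζn : ζ ^ n = 1) (hζa : ζ ^ a = -1) :
    padicValNat 2 a = padicValNat 2 b := by
  set v := padicValNat 2 a with hv
  have hfin : IsOfFinOrder ζ := isOfFinOrder_iff_pow_eq_one.mpr ⟨n, hn, hζn⟩
  set m := orderOf ζ with hm
  have hm0 : m ≠ 0 := (orderOf_pos_iff.mpr hfin).ne'
  have hmn : m ∣ n := orderOf_dvd_of_pow_eq_one hζn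
  have hm2a : m ∣ 2 * a := by
    apply orderOf_dvd_of_pow_eq_one
    rw [mul_comm, pow_mul, hζa]
    norm_num
  have hmna : ¬ m ∣ a := by
    intro h
    have : ζ ^ a = 1 := orderOf_dvd_iff_pow_eq_one.mp h
    rw [hζa] at this
    norm_num at this
  -- ν₂(m) ≥ v + 1
  have hs : v + 1 ≤ padicValNat 2 m := by
    by_contra hle
    push_neg at hle
    have hsv : padicValNat 2 m ≤ v := by omega
    apply hmna
    set s := padicValNat 2 m with hsdef
    have hsplit : 2 ^ s * (m / 2 ^ s) = m := Nat.mul_div_cancel' pow_padicValNat_dvd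
    have hmodd : ¬ 2 ∣ (m / 2 ^ s) := by
      intro h2
      have : 2 ^ (s + 1) ∣ m := by
        rcases h2 with ⟨c, hc⟩
        exact ⟨c, by rw [← hsplit, hc]; ring⟩
      exact pow_succ_padicValNat_not_dvd hm0 this
    have hcop : Nat.Coprime 2 (m / 2 ^ s) := (Nat.coprime_two_left).mpr
      (Nat.odd_iff.mpr (Nat.two_dvd_ne_zero.mp hmodd ▸ rfl))
    have hodddvd : (m / 2 ^ s) ∣ a := by
      have h1 : (m / 2 ^ s) ∣ 2 * a := dvd_trans (Nat.div_dvd_of_dvd pow_padicValNat_dvd) hm2a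
      exact (Nat.Coprime.symm hcop).dvd_of_dvd_mul_left h1
    have h2s : 2 ^ s ∣ a := dvd_trans (pow_dvd_pow 2 hsv) pow_padicValNat_dvd
    have : 2 ^ s * (m / 2 ^ s) ∣ a :=
      Nat.Coprime.mul_dvd_of_dvd_of_dvd (Nat.Coprime.pow_left s hcop) h2s hodddvd
    rwa [hsplit] at this
  have hdvd_n : (2 : ℕ) ^ (v + 1) ∣ n :=
    dvd_trans (dvd_trans (pow_dvd_pow 2 hs) pow_padicValNat_dvd) hmn
  have hd : (2 : ℤ) ^ (v + 1) ∣ (b : ℤ) - a := by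
    have h1 : ((2 : ℤ)) ^ (v + 1) ∣ (n : ℤ) := by exact_mod_cast hdvd_n
    rw [hnab] at h1
    exact (dvd_abs _ _).mp h1
  exact (val_eq_of_dvd_sub a b ha hb hd).symm

theorem stmt_2 (a b : ℕ) (ha : 0 < a) (hb : 0 < b) (hab : a ≠ b) :
    (∃ α β γ : ℂ, α ^ ((b : ℤ) - (a : ℤ)) = 1 ∧ β ^ ((b : ℤ) - (a : ℤ)) = 1 ∧
      γ ^ ((b : ℤ) - (a : ℤ)) = 1 ∧ α ^ a + β ^ a + γ ^ a + 1 = 0) ↔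
      padicValNat 2 a = padicValNat 2 b := by
  have hk0 : (b : ℤ) - (a : ℤ) ≠ 0 := by
    intro h
    apply hab
    omega
  set k : ℤ := (b : ℤ) - (a : ℤ) with hk
  set n : ℕ := k.natAbs with hn
  have hn0 : 0 < n := Int.natAbs_pos.mpr hk0
  have hnab : (n : ℤ) = |k| := (Int.abs_eq_natAbs k).symm
  -- zpow to pow
  have hz2p : ∀ ζ : ℂ, ζ ^ k = 1 → ζ ^ n = 1 := by
    intro ζ hζ
    rcases Int.natAbs_eq k with h | h
    · rw [← zpow_natCast, ← h, hζ]
    · have : ζ ^ (n : ℤ) = 1 := by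
        rw [h] at hζ
        rw [zpow_neg] at hζ
        exact inv_eq_one.mp hζ
      rw [← zpow_natCast]; exact this
  constructor
  · rintro ⟨α, β, γ, hα, hβ, hγ, hsum⟩
    have hαn := hz2p α hα
    have hβn := hz2p β hβ
    have hγn := hz2p γ hγ
    have habs : ∀ ζ : ℂ, ζ ^ n = 1 → (ζ ^ a) * (starRingEnd ℂ) (ζ ^ a) = 1 := by
      intro ζ hζ
      have h1 : ‖ζ‖ ^ n = 1 := by
        rw [← norm_pow, hζ, norm_one]
      have h2 : ‖ζ‖ = 1 := by
        rcases (pow_eq_one_iff_cases).mp h1 with h | h | h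
        · omega
        · exact h
        · exfalso; nlinarith [norm_nonneg ζ]
      rw [Complex.mul_conj, Complex.normSq_eq_norm_sq, norm_pow, h2]
      norm_num
    rcases factor_lemma _ _ _ (habs α hαn) (habs β hβn) (habs γ hγn) hsum with h | h | h
    · exact forward_lemma a b n ha hb hn0 hnab α hαn h
    · exact forward_lemma a b n ha hb hn0 hnab β hβn h
    · exact forward_lemma a b n ha hb hn0 hnab γ hγn h
  · intro hval
    set v := padicValNat 2 a with hv
    have hva : (2 : ℕ) ^ v ∣ a := pow_padicValNat_dvd
    have hna : ¬ (2 : ℕ) ^ (v + 1) ∣ a := pow_succ_padicValNat_not_dvd ha.ne'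
    have hvb : (2 : ℕ) ^ v ∣ b := by
      rw [hval]; exact pow_padicValNat_dvd
    have hnb : ¬ (2 : ℕ) ^ (v + 1) ∣ b := by
      rw [hval]; exact pow_succ_padicValNat_not_dvd hb.ne'
    obtain ⟨a', ha'⟩ := hva
    obtain ⟨b', hb'⟩ := hvb
    have hodda : Odd a' := by
      rw [Nat.odd_iff, ← Nat.two_dvd_ne_zero]
      intro h2
      apply hna
      rcases h2 with ⟨c, hc⟩
      exact ⟨c, by rw [ha', hc]; ring⟩
    have hoddb : Odd b' := by
      rw [Nat.odd_iff, ← Nat.two_dvd_ne_zero]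
      intro h2
      apply hnb
      rcases h2 with ⟨c, hc⟩
      exact ⟨c, by rw [hb', hc]; ring⟩
    -- b - a = 2^v * (b' - a'), with b' - a' even
    obtain ⟨c, hc⟩ : (2 : ℤ) ∣ ((b' : ℤ) - a') := by
      rcases hodda with ⟨i, hi⟩
      rcases hoddb with ⟨j, hj⟩
      exact ⟨(j : ℤ) - i, by push_cast [hi, hj]; ring⟩
    set γ : ℂ := Complex.exp (Real.pi * Complex.I / 2 ^ v) with hγdef
    have hγa : γ ^ a = -1 := by
      rw [← Complex.exp_nat_mul]
      have : (a : ℂ) * (Real.pi * Complex.I / 2 ^ v) = a' * (Real.pi * Complex.I) := by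
        have h2v : ((2 : ℂ) ^ v) ≠ 0 := pow_ne_zero v two_ne_zero
        field_simp
        rw [ha']
        push_cast
        ring
      rw [this, Complex.exp_nat_mul, Complex.exp_pi_mul_I]
      exact Odd.neg_one_pow hodda
    have hγk : γ ^ k = 1 := by
      rw [← Complex.exp_int_mul]
      have : (k : ℂ) * (Real.pi * Complex.I / 2 ^ v) = c * (2 * Real.pi * Complex.I) := by
        have h2v : ((2 : ℂ) ^ v) ≠ 0 := pow_ne_zero v two_ne_zero
        have hkval : (k : ℂ) = 2 ^ v * (2 * c) := by
          have : k = 2 ^ v * ((b' : ℤ) - a') := by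
            rw [hk]
            have hbz : (b : ℤ) = 2 ^ v * b' := by exact_mod_cast hb'
            have haz : (a : ℤ) = 2 ^ v * a' := by exact_mod_cast ha'
            rw [hbz, haz]; ring
          rw [this, hc]
          push_cast
          ring
        field_simp [hkval]
        rw [hkval]
        ring
      rw [this, Complex.exp_int_mul, Complex.exp_two_pi_mul_I, one_zpow]
    exact ⟨1, γ, γ, one_zpow k, hγk, hγk, by rw [hγa, one_pow]; ring⟩
end

section
/- If α, β, γ are complex roots of unity satisfying α + β + γ + 1 = 0, then at least one of α, β, γ equals −1. -/
lemma aux_conj_mul (z : ℂ) (hz : ∃ n : ℕ, 0 < n ∧ z ^ n = 1) :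
    z ≠ 0 ∧ (starRingEnd ℂ) z * z = 1 := by
  obtain ⟨n, hn, he⟩ := hz
  have hz0 : z ≠ 0 := by
    intro h0
    rw [h0, zero_pow hn.ne'] at he
    exact zero_ne_one he
  have habs : ‖z‖ = 1 := Complex.norm_eq_one_of_pow_eq_one he hn.ne'
  refine ⟨hz0, ?_⟩
  rw [mul_comm, Complex.mul_conj, Complex.normSq_eq_norm_sq]
  simp [habs]

theorem stmt_4 (α β γ : ℂ) (hα : ∃ n : ℕ, 0 < n ∧ α ^ n = 1)
    (hβ : ∃ n : ℕ, 0 < n ∧ β ^ n = 1) (hγ : ∃ n : ℕ, 0 < n ∧ γ ^ n = 1)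
    (h : α + β + γ + 1 = 0) :
    α = -1 ∨ β = -1 ∨ γ = -1 := by
  obtain ⟨ha0, ha⟩ := aux_conj_mul α hα
  obtain ⟨hb0, hb⟩ := aux_conj_mul β hβ
  obtain ⟨hc0, hc⟩ := aux_conj_mul γ hγ
  have hconj : (starRingEnd ℂ) α + (starRingEnd ℂ) β + (starRingEnd ℂ) γ + 1 = 0 := by
    have := congrArg (starRingEnd ℂ) h
    simpa using this
  have h2 : α * β + β * γ + α * γ + α * β * γ = 0 := by
    linear_combination α * β * γ * hconj - β * γ * ha - α * γ * hb - α * β * hc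
  by_contra hcon
  push_neg at hcon
  obtain ⟨hα1, hβ1, hγ1⟩ := hcon
  have hα1' : α + 1 ≠ 0 := fun hh => hα1 (by linear_combination hh)
  have hβ1' : β + 1 ≠ 0 := fun hh => hβ1 (by linear_combination hh)
  have hγ1' : γ + 1 ≠ 0 := fun hh => hγ1 (by linear_combination hh)
  -- from the factorization (x+1)(x^2 - αβγ), each root ≠ -1 satisfies x^2 = αβγ
  have ka : α * (α - β * γ) = 0 := by
    have : (α + 1) * (α * (α - β * γ)) = 0 := by
      linear_combination (α ^ 2) * h - α * h2
    rcases mul_eq_zero.mp this with hz | hz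
    · exact absurd hz hα1'
    · exact hz
  have kb : β * (β - α * γ) = 0 := by
    have : (β + 1) * (β * (β - α * γ)) = 0 := by
      linear_combination (β ^ 2) * h - β * h2
    rcases mul_eq_zero.mp this with hz | hz
    · exact absurd hz hβ1'
    · exact hz
  have kc : γ * (γ - α * β) = 0 := by
    have : (γ + 1) * (γ * (γ - α * β)) = 0 := by
      linear_combination (γ ^ 2) * h - γ * h2
    rcases mul_eq_zero.mp this with hz | hz
    · exact absurd hz hγ1'
    · exact hz
  have ea : α = β * γ := by
    rcases mul_eq_zero.mp ka with hz | hz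
    · exact absurd hz ha0
    · exact (sub_eq_zero.mp hz)
  have eb : β = α * γ := by
    rcases mul_eq_zero.mp kb with hz | hz
    · exact absurd hz hb0
    · exact (sub_eq_zero.mp hz)
  have ec : γ = α * β := by
    rcases mul_eq_zero.mp kc with hz | hz
    · exact absurd hz hc0
    · exact (sub_eq_zero.mp hz)
  have hg2 : α * (γ ^ 2 - 1) = 0 := by
    linear_combination (-1 : ℂ) * ea + (-γ) * eb
  have hg2' : γ ^ 2 = 1 := by
    rcases mul_eq_zero.mp hg2 with hz | hz
    · exact absurd hz ha0
    · linear_combination hz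
  have hγeq : γ = 1 := by
    have hfac : (γ - 1) * (γ + 1) = 0 := by linear_combination hg2'
    rcases mul_eq_zero.mp hfac with hz | hz
    · exact sub_eq_zero.mp hz
    · exact absurd ((by linear_combination hz : γ = -1)) hγ1
  have hab : α * β = 1 := by rw [← ec, hγeq]
  have hae : α = β := by rw [ea, hγeq, mul_one]
  have ha2 : α ^ 2 = 1 := by linear_combination hab + α * hae
  have hαeq : α = 1 := by
    have hfac : (α - 1) * (α + 1) = 0 := by linear_combination ha2
    rcases mul_eq_zero.mp hfac with hz | hz
    · exact sub_eq_zero.mp hz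
    · exact absurd ((by linear_combination hz : α = -1)) hα1
  have hβeq : β = 1 := hae.symm.trans hαeq
  rw [hαeq, hβeq, hγeq] at h
  norm_num at h
end

section
/- Let w be a complex number and 0 ≤ δ ≤ 1/10 a real number such that e^{−δ} ≤ |w| ≤ e^{δ} and e^{−δ} ≤ |1 + w| ≤ e^{δ}. Then |w² + w + 1| ≤ 10δ. -/
theorem stmt_5 (w : ℂ) (δ : ℝ) (hδ0 : 0 ≤ δ) (hδ1 : δ ≤ 1 / 10)
    (h1 : Real.exp (-δ) ≤ ‖w‖) (h2 : ‖w‖ ≤ Real.exp δ)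
    (h3 : Real.exp (-δ) ≤ ‖1 + w‖) (h4 : ‖1 + w‖ ≤ Real.exp δ) :
    ‖w ^ 2 + w + 1‖ ≤ 10 * δ := by
  -- exp (1/5) ≤ 5/4
  have h5 : Real.exp (1/5) ≤ 5/4 := by
    by_contra h'
    push_neg at h'
    have hp : ((5:ℝ)/4)^5 ≤ (Real.exp (1/5))^5 := pow_le_pow_left₀ (by norm_num) h'.le 5
    have he : (Real.exp (1/5))^5 = Real.exp 1 := by
      rw [← Real.exp_nat_mul]; norm_num
    have := Real.exp_one_lt_d9
    rw [he] at hp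
    norm_num at hp
    linarith
  have hexp5 : Real.exp (2*δ) ≤ 5/4 := by
    calc Real.exp (2*δ) ≤ Real.exp (1/5) := Real.exp_le_exp.2 (by linarith)
    _ ≤ 5/4 := h5
  have hlow : 1 - 2*δ ≤ Real.exp (-(2*δ)) := by
    have := Real.add_one_le_exp (-(2*δ)); linarith
  have hup : Real.exp (2*δ) ≤ 1 + 5/2*δ := by
    have hpos := Real.exp_pos (2*δ)
    have hinv : Real.exp (-(2*δ)) = (Real.exp (2*δ))⁻¹ := Real.exp_neg _
    have : (1 - 2*δ) * Real.exp (2*δ) ≤ 1 := by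
      rw [hinv] at hlow
      calc (1 - 2*δ) * Real.exp (2*δ) ≤ (Real.exp (2*δ))⁻¹ * Real.exp (2*δ) :=
        mul_le_mul_of_nonneg_right hlow hpos.le
      _ = 1 := inv_mul_cancel₀ hpos.ne'
    nlinarith
  -- squared bounds
  have hexpsq : ∀ t : ℝ, (Real.exp t)^2 = Real.exp (2*t) := by
    intro t; rw [pow_two, ← Real.exp_add]; ring_nf
  set a := Complex.normSq w with ha
  set b := Complex.normSq (1+w) with hb
  have ha2 : a ≤ Real.exp (2*δ) := by
    have := pow_le_pow_left₀ (norm_nonneg w) h2 2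
    rwa [Complex.sq_norm, hexpsq] at this
  have ha1 : Real.exp (2*(-δ)) ≤ a := by
    have := pow_le_pow_left₀ (Real.exp_pos (-δ)).le h1 2
    rwa [Complex.sq_norm, hexpsq] at this
  have hb2 : b ≤ Real.exp (2*δ) := by
    have := pow_le_pow_left₀ (norm_nonneg (1+w)) h4 2
    rwa [Complex.sq_norm, hexpsq] at this
  have hb1 : Real.exp (2*(-δ)) ≤ b := by
    have := pow_le_pow_left₀ (Real.exp_pos (-δ)).le h3 2
    rwa [Complex.sq_norm, hexpsq] at this
  have hneg : (2:ℝ)*(-δ) = -(2*δ) := by ring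
  rw [hneg] at ha1 hb1
  -- bounds on a, b
  have hau : a ≤ 1 + 5/2*δ := le_trans ha2 hup
  have hal : 1 - 2*δ ≤ a := le_trans hlow ha1
  have hbu : b ≤ 1 + 5/2*δ := le_trans hb2 hup
  have hbl : 1 - 2*δ ≤ b := le_trans hlow hb1
  -- key identity
  have hid : Complex.normSq (w^2 + w + 1) = a^2 + b^2 - a*b - a - b + 1 := by
    simp only [ha, hb, Complex.normSq_apply, Complex.add_re, Complex.add_im,
      Complex.one_re, Complex.one_im, Complex.mul_re, Complex.mul_im, pow_two]
    ring
  have key : Complex.normSq (w^2 + w + 1) ≤ (10*δ)^2 := by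
    rw [hid]
    nlinarith [mul_nonneg (sub_nonneg.2 hau) (sub_nonneg.2 hal),
      mul_nonneg (sub_nonneg.2 hbu) (sub_nonneg.2 hbl),
      mul_nonneg (sub_nonneg.2 hal) (sub_nonneg.2 hbl), sq_nonneg δ]
  rw [← Complex.sq_norm] at key
  have h0 : (0:ℝ) ≤ ‖w^2 + w + 1‖ := norm_nonneg _
  nlinarith [key, h0, hδ0]
end

section
/- Let K be a field of characteristic different from 2, and let a, b be positive integers with d = gcd(a,b). The power sums p_a = x₁^a + x₂^a and p_b = x₁^b + x₂^b form a regular sequence in K[x₁, x₂] if and only if at least one of a/d or b/d is even. -/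
open RingTheory.Sequence MvPolynomial

private lemma aux_smul_top_eq {R} [CommRing R] (I : Ideal R) :
    I • (⊤ : Submodule R R) = I := by
  rw [smul_eq_mul, Ideal.mul_top]

private lemma aux_pair_iff {R} [CommRing R] (f g : R) :
    RingTheory.Sequence.IsRegular R [f, g] ↔
      ((∀ z : R, f * z = 0 → z = 0) ∧ (∀ z : R, f ∣ g * z → f ∣ z) ∧
        Ideal.span {f, g} ≠ ⊤) := by
  have hof : Ideal.ofList [f, g] = Ideal.span {f, g} := by
    rw [Ideal.ofList_cons, Ideal.ofList_singleton, ← Ideal.span_union]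
    rw [Set.singleton_union]
  have e0 : IsSMulRegular (R ⧸ (Ideal.ofList (List.take 0 [f,g]) • ⊤ : Submodule R R)) f
      ↔ ∀ z : R, f * z = 0 → z = 0 := by
    rw [show (List.take 0 [f,g]) = [] from rfl, Ideal.ofList_nil,
      isSMulRegular_quotient_iff_mem_of_smul_mem]
    simp [smul_eq_mul]
  have e1 : IsSMulRegular (R ⧸ (Ideal.ofList (List.take 1 [f,g]) • ⊤ : Submodule R R)) g
      ↔ ∀ z : R, f ∣ g * z → f ∣ z := by
    rw [show (List.take 1 [f,g]) = [f] from rfl, Ideal.ofList_singleton, aux_smul_top_eq,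
      isSMulRegular_quotient_iff_mem_of_smul_mem]
    simp [smul_eq_mul, Ideal.mem_span_singleton]
  rw [RingTheory.Sequence.isRegular_iff, isWeaklyRegular_iff, hof]
  constructor
  · rintro ⟨hw, ht⟩
    refine ⟨e0.mp (hw 0 (by norm_num)), e1.mp (hw 1 (by norm_num)), ?_⟩
    rw [aux_smul_top_eq] at ht
    exact fun h => ht h.symm
  · rintro ⟨h0, h1, ht⟩
    refine ⟨fun i hi => ?_, ?_⟩
    · rcases i with _ | _ | i
      · exact e0.mpr h0
      · exact e1.mpr h1
      · exact absurd hi (by simp)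
    · rw [aux_smul_top_eq]
      exact fun h => ht h.symm

private lemma aux_dvd_sub_of_dvd {A : Type*} [CommRing A] (x y : A) (k n : ℕ) (h : k ∣ n) :
    x ^ k - y ^ k ∣ x ^ n - y ^ n := by
  obtain ⟨m, rfl⟩ := h
  simpa [pow_mul] using sub_dvd_pow_sub_pow (x ^ k) (y ^ k) m

private lemma aux_add_dvd_sub_of_even {A : Type*} [CommRing A] (x y : A) (k m : ℕ)
    (hm : Even m) : x ^ k + y ^ k ∣ x ^ (k * m) - y ^ (k * m) := by
  have := sub_dvd_pow_sub_pow (x ^ k) (-(y ^ k)) m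
  rwa [sub_neg_eq_add, hm.neg_pow, ← pow_mul, ← pow_mul] at this

private lemma aux_add_dvd_add_of_odd {A : Type*} [CommRing A] (x y : A) (k m : ℕ)
    (hm : Odd m) : x ^ k + y ^ k ∣ x ^ (k * m) + y ^ (k * m) := by
  simpa [pow_mul] using Odd.add_dvd_pow_add_pow (x ^ k) (y ^ k) hm

private lemma aux_two_mul_id {A : Type*} [CommRing A] (x y : A) (n : ℕ) :
    x ^ (2 * n) - y ^ (2 * n) = (x ^ n + y ^ n) * (x ^ n - y ^ n) := by
  rw [two_mul, pow_add, pow_add]; ring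

private lemma aux_descent {A : Type*} [CommRing A] {q x y : A} (hq : Prime q) (hqy : ¬ q ∣ y)
    (m n : ℕ) (h1 : q ∣ x ^ m - y ^ m) (h2 : q ∣ x ^ n - y ^ n) :
    q ∣ x ^ Nat.gcd m n - y ^ Nat.gcd m n := by
  rcases Nat.eq_zero_or_pos m with hm | hm
  · subst hm; simpa using h2
  rcases Nat.eq_zero_or_pos n with hn | hn
  · subst hn; simpa using h1
  have key : ∀ s t : ℕ, q ∣ x ^ s - y ^ s → q ∣ x ^ (s + t) - y ^ (s + t) →
      q ∣ x ^ t - y ^ t := by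
    intro s t hs hst
    have hys : q ∣ y ^ s * (x ^ t - y ^ t) := by
      have hid : y ^ s * (x ^ t - y ^ t)
          = (x ^ (s + t) - y ^ (s + t)) - x ^ t * (x ^ s - y ^ s) := by
        rw [pow_add, pow_add]; ring
      rw [hid]
      exact dvd_sub hst (Dvd.dvd.mul_left hs _)
    rcases hq.dvd_mul.mp hys with h | h
    · exact absurd (hq.dvd_of_dvd_pow h) hqy
    · exact h
  rcases le_or_gt m n with h | h
  · obtain ⟨k, rfl⟩ : ∃ k, n = m + k := ⟨n - m, (Nat.add_sub_cancel' h).symm⟩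
    have h3 : q ∣ x ^ k - y ^ k := key m k h1 h2
    have h4 := aux_descent hq hqy m k h1 h3
    rwa [Nat.gcd_self_add_right]
  · obtain ⟨k, rfl⟩ : ∃ k, m = n + k := ⟨m - n, (Nat.add_sub_cancel' h.le).symm⟩
    have h3 : q ∣ x ^ k - y ^ k := key n k h2 h1
    have h4 := aux_descent hq hqy k n h3 h2
    rwa [Nat.gcd_self_add_left]
termination_by m + n
decreasing_by
  · omega
  · omega

private lemma aux_prime_X0 {K : Type*} [Field K] : Prime (X 0 : MvPolynomial (Fin 2) K) := by
  rw [← MulEquiv.prime_iff (finSuccEquiv K 1).toMulEquiv]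
  simpa [finSuccEquiv_X_zero] using
    (Polynomial.prime_X : Prime (Polynomial.X : Polynomial (MvPolynomial (Fin 1) K)))

private lemma aux_prime_X1 {K : Type*} [Field K] : Prime (X 1 : MvPolynomial (Fin 2) K) := by
  have h := (MulEquiv.prime_iff (renameEquiv K (Equiv.swap (0 : Fin 2) 1)).toMulEquiv).mpr aux_prime_X0
  simpa using h

private lemma aux_X0_not_dvd_X1 {K : Type*} [Field K] :
    ¬ (X 0 : MvPolynomial (Fin 2) K) ∣ X 1 := by
  rintro ⟨c, hc⟩
  have := congrArg (eval (fun i : Fin 2 => if i = 0 then (0:K) else 1)) hc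
  simp at this

private lemma aux_X1_not_dvd_X0 {K : Type*} [Field K] :
    ¬ (X 1 : MvPolynomial (Fin 2) K) ∣ X 0 := by
  rintro ⟨c, hc⟩
  have := congrArg (eval (fun i : Fin 2 => if i = 0 then (1:K) else 0)) hc
  simp at this

private lemma aux_assoc_dvd {A : Type*} [CommMonoidWithZero A] [IsCancelMulZero A] {q p : A} (hq : Prime q)
    (hp : Prime p) (h : q ∣ p) : p ∣ q := by
  obtain ⟨c, hc⟩ := h
  rcases hp.irreducible.isUnit_or_isUnit hc with hu | hu
  · exact absurd hu hq.not_isUnit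
  · obtain ⟨u, rfl⟩ := hu
    exact ⟨↑u⁻¹, by rw [hc, mul_assoc, Units.mul_inv, mul_one]⟩

private lemma aux_not_dvd_var {K : Type*} [Field K] {q : MvPolynomial (Fin 2) K}
    (hq : Prime q) {n : ℕ} (hn : 0 < n) (hdvd : q ∣ X 0 ^ n + X 1 ^ n) :
    ¬ q ∣ X 0 ∧ ¬ q ∣ X 1 := by
  constructor
  · intro hqx
    have hx0q := aux_assoc_dvd hq aux_prime_X0 hqx
    have h1 : (X 0 : MvPolynomial (Fin 2) K) ∣ X 1 ^ n := by
      have := dvd_sub (hx0q.trans hdvd) (dvd_pow_self (X 0 : MvPolynomial (Fin 2) K) hn.ne')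
      simpa using this
    exact aux_X0_not_dvd_X1 (aux_prime_X0.dvd_of_dvd_pow h1)
  · intro hqy
    have hx1q := aux_assoc_dvd hq aux_prime_X1 hqy
    have h1 : (X 1 : MvPolynomial (Fin 2) K) ∣ X 0 ^ n := by
      have := dvd_sub (hx1q.trans hdvd) (dvd_pow_self (X 1 : MvPolynomial (Fin 2) K) hn.ne')
      simpa using this
    exact aux_X1_not_dvd_X0 (aux_prime_X1.dvd_of_dvd_pow h1)

private lemma aux_s_ne_zero {K : Type*} [Field K] {n : ℕ} (hn : 0 < n) :
    (X 0 ^ n + X 1 ^ n : MvPolynomial (Fin 2) K) ≠ 0 := by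
  intro h
  have := congrArg (eval (fun i : Fin 2 => if i = 0 then (1:K) else 0)) h
  simp [zero_pow hn.ne'] at this

private lemma aux_s_not_unit {K : Type*} [Field K] {n : ℕ} (hn : 0 < n) :
    ¬ IsUnit (X 0 ^ n + X 1 ^ n : MvPolynomial (Fin 2) K) := by
  intro h
  have := h.map (eval (fun _ : Fin 2 => (0:K)))
  simp [zero_pow hn.ne'] at this

private lemma aux_span_ne_top {K : Type*} [Field K] {a b : ℕ} (ha : 0 < a) (hb : 0 < b) :
    Ideal.span {(X 0 ^ a + X 1 ^ a : MvPolynomial (Fin 2) K), X 0 ^ b + X 1 ^ b} ≠ ⊤ := by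
  intro h
  have h1 : (1 : MvPolynomial (Fin 2) K)
      ∈ Ideal.span {(X 0 ^ a + X 1 ^ a : MvPolynomial (Fin 2) K), X 0 ^ b + X 1 ^ b} :=
    h ▸ Submodule.mem_top
  obtain ⟨u, v, huv⟩ := Ideal.mem_span_pair.mp h1
  have := congrArg (eval (fun _ : Fin 2 => (0:K))) huv
  simp [zero_pow ha.ne', zero_pow hb.ne'] at this

private lemma aux_relprime_of_even {K : Type*} [Field K] (hchar : (2 : K) ≠ 0)
    (a b d : ℕ) (ha : 0 < a) (hb : 0 < b) (hd : d = Nat.gcd a b) (hae : Even (a / d)) :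
    IsRelPrime (X 0 ^ a + X 1 ^ a : MvPolynomial (Fin 2) K) (X 0 ^ b + X 1 ^ b) := by
  have hda : d ∣ a := hd ▸ Nat.gcd_dvd_left a b
  have h2u : IsUnit (2 : MvPolynomial (Fin 2) K) := by
    have hC : (C (2:K) : MvPolynomial (Fin 2) K) = 2 := map_ofNat C 2
    refine IsUnit.of_mul_eq_one (a := 2) (C (2⁻¹ : K)) ?_
    rw [← hC, ← C_mul, mul_inv_cancel₀ hchar, C_1]
  intro c hc1 hc2
  by_contra hcu
  have hc0 : c ≠ 0 := by
    rintro rfl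
    exact aux_s_ne_zero ha (zero_dvd_iff.mp hc1)
  obtain ⟨q, hqi, hqc⟩ := WfDvdMonoid.exists_irreducible_factor hcu hc0
  have hq : Prime q := UniqueFactorizationMonoid.irreducible_iff_prime.mp hqi
  have hqa : q ∣ X 0 ^ a + X 1 ^ a := hqc.trans hc1
  have hqb : q ∣ X 0 ^ b + X 1 ^ b := hqc.trans hc2
  obtain ⟨hqx, hqy⟩ := aux_not_dvd_var hq ha hqa
  have h2a : q ∣ X 0 ^ (2*a) - X 1 ^ (2*a) := by
    rw [aux_two_mul_id]; exact Dvd.dvd.mul_right hqa _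
  have h2b : q ∣ X 0 ^ (2*b) - X 1 ^ (2*b) := by
    rw [aux_two_mul_id]; exact Dvd.dvd.mul_right hqb _
  have hgcd : Nat.gcd (2*a) (2*b) = 2*d := by rw [Nat.gcd_mul_left, ← hd]
  have h2d : q ∣ X 0 ^ (2*d) - X 1 ^ (2*d) := hgcd ▸ aux_descent hq hqy (2*a) (2*b) h2a h2b
  rw [aux_two_mul_id] at h2d
  have hma : q ∣ X 0 ^ a - X 1 ^ a := by
    rcases hq.dvd_mul.mp h2d with h | h
    · refine h.trans ?_
      have := aux_add_dvd_sub_of_even (X 0 : MvPolynomial (Fin 2) K) (X 1) d (a/d) hae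
      rwa [Nat.mul_div_cancel' hda] at this
    · exact h.trans (aux_dvd_sub_of_dvd _ _ d a hda)
  have h2x : q ∣ 2 * X 0 ^ a := by
    have hid : (X 0 ^ a + X 1 ^ a) + (X 0 ^ a - X 1 ^ a)
        = 2 * (X 0 ^ a : MvPolynomial (Fin 2) K) := by ring
    have := dvd_add hqa hma
    rwa [hid] at this
  have hqxa : q ∣ (X 0 : MvPolynomial (Fin 2) K) ^ a := by
    rcases hq.dvd_mul.mp h2x with h | h
    · exact absurd (isUnit_of_dvd_unit h h2u) hq.not_isUnit
    · exact h
  exact hqx (hq.dvd_of_dvd_pow hqxa)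

open MvPolynomial in
theorem stmt_7 (K : Type*) [Field K] (hchar : (2 : K) ≠ 0)
    (a b : ℕ) (ha : 0 < a) (hb : 0 < b) (d : ℕ) (hd : d = Nat.gcd a b) :
    RingTheory.Sequence.IsRegular (MvPolynomial (Fin 2) K)
      [(X 0 ^ a + X 1 ^ a : MvPolynomial (Fin 2) K), X 0 ^ b + X 1 ^ b] ↔
      (Even (a / d) ∨ Even (b / d)) := by
  have hdpos : 0 < d := by
    subst hd
    exact Nat.gcd_pos_of_pos_left b ha
  have hda : d ∣ a := hd ▸ Nat.gcd_dvd_left a b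
  have hdb : d ∣ b := hd ▸ Nat.gcd_dvd_right a b
  rw [aux_pair_iff]
  constructor
  · rintro ⟨h0, h1, hsp⟩
    by_contra hne
    push_neg at hne
    obtain ⟨hao, hbo⟩ := hne
    have hao' : Odd (a / d) := Nat.not_even_iff_odd.mp hao
    have hbo' : Odd (b / d) := Nat.not_even_iff_odd.mp hbo
    have hsd_a : (X 0 ^ d + X 1 ^ d : MvPolynomial (Fin 2) K) ∣ X 0 ^ a + X 1 ^ a := by
      have := aux_add_dvd_add_of_odd (X 0 : MvPolynomial (Fin 2) K) (X 1) d (a/d) hao'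
      rwa [Nat.mul_div_cancel' hda] at this
    have hsd_b : (X 0 ^ d + X 1 ^ d : MvPolynomial (Fin 2) K) ∣ X 0 ^ b + X 1 ^ b := by
      have := aux_add_dvd_add_of_odd (X 0 : MvPolynomial (Fin 2) K) (X 1) d (b/d) hbo'
      rwa [Nat.mul_div_cancel' hdb] at this
    obtain ⟨h, hh⟩ := hsd_a
    obtain ⟨k, hk⟩ := hsd_b
    have hdvd : (X 0 ^ a + X 1 ^ a : MvPolynomial (Fin 2) K) ∣ (X 0 ^ b + X 1 ^ b) * h :=
      ⟨k, by rw [hh, hk]; ring⟩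
    obtain ⟨t, ht⟩ := h1 h hdvd
    have hs0 : (X 0 ^ a + X 1 ^ a : MvPolynomial (Fin 2) K) ≠ 0 := aux_s_ne_zero ha
    have heq : (X 0 ^ a + X 1 ^ a : MvPolynomial (Fin 2) K) * 1
        = (X 0 ^ a + X 1 ^ a) * ((X 0 ^ d + X 1 ^ d) * t) := by
      conv_lhs => rw [mul_one, hh, ht]
      ring
    have h1u := mul_left_cancel₀ hs0 heq
    exact aux_s_not_unit hdpos (IsUnit.of_mul_eq_one t h1u.symm)
  · intro h
    have hrel : IsRelPrime (X 0 ^ a + X 1 ^ a : MvPolynomial (Fin 2) K)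
        (X 0 ^ b + X 1 ^ b) := by
      rcases h with he | he
      · exact aux_relprime_of_even hchar a b d ha hb hd he
      · exact (aux_relprime_of_even hchar b a d hb ha (hd.trans (Nat.gcd_comm a b)) he).symm
    refine ⟨?_, ?_, aux_span_ne_top ha hb⟩
    · intro z hz
      rcases mul_eq_zero.mp hz with h' | h'
      · exact absurd h' (aux_s_ne_zero ha)
      · exact h'
    · intro z hz
      exact hrel.dvd_of_dvd_mul_left hz
end

section
/- Let K be a field and let a₁, ..., aₙ be positive integers with d = gcd(a₁, ..., aₙ). The power sums p_{a₁}, ..., p_{aₙ} form a regular sequence in K[x₁, ..., xₙ] if and only if p_{a₁/d}, ..., p_{aₙ/d} form a regular sequence. -/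
open Submodule RingTheory.Sequence Pointwise MvPolynomial

section PiLemma

variable {R : Type*} [CommRing R]

lemma aux_mem_smul_top_iff' {M : Type*} [AddCommGroup M] [Module R M] (r : R) (x : M) :
    x ∈ (r • ⊤ : Submodule R M) ↔ ∃ y, r • y = x := by
  constructor
  · rintro ⟨y, -, rfl⟩
    exact ⟨y, rfl⟩
  · rintro ⟨y, rfl⟩
    exact ⟨y, trivial, rfl⟩

lemma aux_top_eq_bot_iff' {M : Type*} [AddCommGroup M] [Module R M] :
    (⊤ : Submodule R M) = ⊥ ↔ ∀ x : M, x = 0 := by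
  rw [eq_bot_iff]
  simp [SetLike.le_def]

variable {ι : Type*} [Fintype ι] [DecidableEq ι]

omit [Fintype ι] [DecidableEq ι] in
lemma aux_smul_top_pi {M : Type*} [AddCommGroup M] [Module R M] (r : R) :
    (r • ⊤ : Submodule R (ι → M)) = Submodule.pi Set.univ (fun _ => (r • ⊤ : Submodule R M)) := by
  ext x
  simp only [aux_mem_smul_top_iff', Submodule.mem_pi, Set.mem_univ, forall_true_left]
  constructor
  · rintro ⟨y, rfl⟩ i
    exact ⟨y i, rfl⟩
  · intro h
    choose y hy using h
    exact ⟨fun i => y i, funext fun i => hy i⟩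

noncomputable def auxQuotSMulTopPiEquiv (M : Type*) [AddCommGroup M] [Module R M] (r : R) :
    QuotSMulTop r (ι → M) ≃ₗ[R] (ι → QuotSMulTop r M) :=
  (Submodule.quotEquivOfEq _ _ (aux_smul_top_pi r)).trans (Submodule.quotientPi _)

omit [Fintype ι] [DecidableEq ι] in
lemma aux_isSMulRegular_pi_iff [Nonempty ι] {M : Type*} [AddCommGroup M] [Module R M] (r : R) :
    IsSMulRegular (ι → M) r ↔ IsSMulRegular M r := by
  constructor
  · intro h x y hxy
    have := h (show r • (fun _ => x : ι → M) = r • (fun _ => y) from funext fun _ => hxy)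
    exact congrFun this (Classical.arbitrary ι)
  · intro h x y hxy
    exact funext fun i => h (congrFun hxy i)

lemma aux_isRegular_pi_iff [Nonempty ι] {M : Type*} [AddCommGroup M] [Module R M] (rs : List R) :
    IsRegular (ι → M) rs ↔ IsRegular M rs := by
  induction rs generalizing M with
  | nil =>
    rw [isRegular_iff, isRegular_iff]
    simp only [RingTheory.Sequence.IsWeaklyRegular.nil, true_and, Ideal.ofList_nil, bot_smul,
      ne_eq, aux_top_eq_bot_iff']
    constructor
    · intro h h'
      exact h fun f => funext fun i => h' (f i)
    · intro h h'
      exact h fun x => congrFun (h' fun _ => x) (Classical.arbitrary ι)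
  | cons r rs ih =>
    rw [isRegular_cons_iff, isRegular_cons_iff, aux_isSMulRegular_pi_iff,
      (auxQuotSMulTopPiEquiv M r).isRegular_congr, ih]

end PiLemma

lemma aux_isRegular_map_algebraMap_iff {R S M : Type*} [CommRing R] [CommRing S] [Algebra R S]
    [AddCommGroup M] [Module R M] [Module S M] [IsScalarTower R S M] (rs : List R) :
    IsRegular M (rs.map (algebraMap R S)) ↔ IsRegular M rs := by
  rw [isRegular_iff, isRegular_iff, isWeaklyRegular_map_algebraMap_iff]
  refine and_congr_right fun _ => ?_
  rw [ne_eq, ne_eq, ← Submodule.restrictScalars_inj R S,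
    ← Ideal.map_ofList, Ideal.smul_restrictScalars, Submodule.restrictScalars_top]

noncomputable section

variable (K : Type*) [Field K] (n d : ℕ)

def auxEmbEquiv (hd : 0 < d) : (Σ _ : Fin n → Fin d, (Fin n →₀ ℕ)) ≃ (Fin n →₀ ℕ) where
  toFun x := d • x.2 + Finsupp.equivFunOnFinite.symm (fun j => (x.1 j : ℕ))
  invFun m := ⟨fun j => ⟨m j % d, Nat.mod_lt _ hd⟩,
    Finsupp.equivFunOnFinite.symm fun j => m j / d⟩
  left_inv := by
    rintro ⟨e, q⟩
    refine Sigma.ext (funext fun j => Fin.ext ?_) (heq_of_eq (Finsupp.ext fun j => ?_))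
    · simp only [Finsupp.add_apply, Finsupp.smul_apply, smul_eq_mul,
        Finsupp.coe_equivFunOnFinite_symm]
      rw [Nat.mul_add_mod, Nat.mod_eq_of_lt (e j).isLt]
    · simp only [Finsupp.coe_equivFunOnFinite_symm, Finsupp.add_apply,
        Finsupp.smul_apply, smul_eq_mul]
      rw [Nat.mul_add_div hd, Nat.div_eq_of_lt (e j).isLt, add_zero]
  right_inv := by
    intro m
    ext j
    simp only [Finsupp.add_apply, Finsupp.smul_apply, smul_eq_mul,
      Finsupp.coe_equivFunOnFinite_symm]
    exact Nat.div_add_mod _ _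

lemma aux_expand_monomial_one (hd : 0 < d) (q : Fin n →₀ ℕ) :
    expand d (monomial q (1 : K)) = monomial (d • q) 1 := by
  rw [expand_monomial, monomial_eq, Finsupp.prod]

abbrev AuxRp := MvPolynomial (Fin n) K

def auxPiToPoly (hd : 0 < d) : ((Fin n → Fin d) → AuxRp K n) ≃ₗ[K] AuxRp K n :=
  (Pi.basis fun _ => basisMonomials (Fin n) K).equiv (basisMonomials (Fin n) K)
    (auxEmbEquiv n d hd)

lemma auxPiToPoly_single (hd : 0 < d) (e : Fin n → Fin d) (q : Fin n →₀ ℕ) :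
    auxPiToPoly K n d hd (Pi.single e (monomial q (1 : K)))
      = monomial (auxEmbEquiv n d hd ⟨e, q⟩) 1 := by
  have h : Pi.single e (monomial q (1 : K)) =
      (Pi.basis fun _ : Fin n → Fin d => basisMonomials (Fin n) K) ⟨e, q⟩ := by
    rw [Pi.basis_apply]
    simp
  rw [h, auxPiToPoly, Module.Basis.equiv_apply]
  simp

lemma auxPiToPoly_smul (hd : 0 < d) (r : AuxRp K n) (g : (Fin n → Fin d) → AuxRp K n) :
    auxPiToPoly K n d hd (r • g) = expand d r * auxPiToPoly K n d hd g := by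
  have h1 : ∀ (e : Fin n → Fin d) (q : Fin n →₀ ℕ) (r : AuxRp K n),
      auxPiToPoly K n d hd (r • (Pi.single e (monomial q (1:K)) : (Fin n → Fin d) → AuxRp K n)) =
        expand d r * auxPiToPoly K n d hd (Pi.single e (monomial q (1:K))) := by
    intro e q
    have := Module.Basis.ext (basisMonomials (Fin n) K)
      (f₁ := (auxPiToPoly K n d hd).toLinearMap ∘ₗ (LinearMap.single K (fun _ : Fin n → Fin d => AuxRp K n) e) ∘ₗ (LinearMap.mulRight K (monomial q (1:K))))
      (f₂ := (LinearMap.mulRight K (auxPiToPoly K n d hd (Pi.single e (monomial q (1:K))))) ∘ₗ (expand d).toLinearMap)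
      (by
        intro q'
        simp only [LinearMap.coe_comp, Function.comp_apply, coe_basisMonomials,
          LinearMap.mulRight_apply, LinearMap.coe_single, LinearEquiv.coe_coe,
          AlgHom.toLinearMap_apply]
        rw [monomial_mul, one_mul, auxPiToPoly_single, auxPiToPoly_single,
          aux_expand_monomial_one K n d hd, monomial_mul, one_mul]
        have hidx : auxEmbEquiv n d hd ⟨e, q' + q⟩ = d • q' + auxEmbEquiv n d hd ⟨e, q⟩ := by
          show d • (q' + q) + _ = d • q' + (d • q + _)
          rw [smul_add, add_assoc]
        rw [hidx])
    intro r
    have h2 := LinearMap.congr_fun this r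
    simp only [LinearMap.coe_comp, Function.comp_apply, LinearMap.mulRight_apply,
      LinearMap.coe_single, LinearEquiv.coe_coe, AlgHom.toLinearMap_apply] at h2
    rw [← h2, ← smul_eq_mul, Pi.single_smul]
  have := Module.Basis.ext (Pi.basis fun _ : Fin n → Fin d => basisMonomials (Fin n) K)
    (f₁ := (auxPiToPoly K n d hd).toLinearMap ∘ₗ ((LinearMap.lsmul (AuxRp K n) ((Fin n → Fin d) → AuxRp K n) r).restrictScalars K))
    (f₂ := (LinearMap.mulLeft K (expand d r)) ∘ₗ (auxPiToPoly K n d hd).toLinearMap)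
    (by
      rintro ⟨e, q⟩
      simp only [LinearMap.coe_comp, Function.comp_apply, LinearMap.coe_restrictScalars,
        LinearMap.lsmul_apply, LinearMap.mulLeft_apply, LinearEquiv.coe_coe, Pi.basis_apply,
        coe_basisMonomials]
      exact h1 e q r)
  have h3 := LinearMap.congr_fun this g
  simpa using h3

/-- `MvPolynomial (Fin n) K` viewed as an algebra over itself via `expand d`. -/
def AuxPolyExpand (K : Type*) [Field K] (n : ℕ) (_d : ℕ) : Type _ := MvPolynomial (Fin n) K

instance : CommRing (AuxPolyExpand K n d) := inferInstanceAs (CommRing (MvPolynomial (Fin n) K))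

instance : Algebra (AuxRp K n) (AuxPolyExpand K n d) :=
  RingHom.toAlgebra
    ((expand d : AuxRp K n →ₐ[K] AuxRp K n).toRingHom : AuxRp K n →+* AuxPolyExpand K n d)

def auxPiToExpand (hd : 0 < d) :
    ((Fin n → Fin d) → AuxRp K n) ≃ₗ[AuxRp K n] AuxPolyExpand K n d where
  toFun g := (auxPiToPoly K n d hd g : AuxPolyExpand K n d)
  invFun x := (auxPiToPoly K n d hd).symm (x : AuxRp K n)
  left_inv g := (auxPiToPoly K n d hd).symm_apply_apply g
  right_inv x := (auxPiToPoly K n d hd).apply_symm_apply x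
  map_add' g₁ g₂ := (auxPiToPoly K n d hd).map_add g₁ g₂
  map_smul' r g := auxPiToPoly_smul K n d hd r g

def auxExpandAddEquiv : AuxPolyExpand K n d ≃+ AuxRp K n :=
  AddEquiv.refl (MvPolynomial (Fin n) K)

end

open MvPolynomial in
theorem stmt_8 (K : Type*) [Field K] (n : ℕ) (a : Fin n → ℕ) (ha : ∀ i, 0 < a i)
    (d : ℕ) (hd : d = Finset.univ.gcd a) :
    RingTheory.Sequence.IsRegular (MvPolynomial (Fin n) K)
      (List.ofFn fun i => (∑ j : Fin n, X j ^ a i : MvPolynomial (Fin n) K)) ↔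
    RingTheory.Sequence.IsRegular (MvPolynomial (Fin n) K)
      (List.ofFn fun i => (∑ j : Fin n, X j ^ (a i / d) : MvPolynomial (Fin n) K)) := by
  rcases Nat.eq_zero_or_pos n with hn | hn
  · subst hn
    simp [List.ofFn_zero]
  -- d is positive
  have hd0 : 0 < d := by
    rcases Nat.eq_zero_or_pos d with h0 | h0
    · exfalso
      have := (Finset.gcd_eq_zero_iff.mp (h0 ▸ hd).symm) ⟨0, hn⟩ (Finset.mem_univ _)
      exact (ha ⟨0, hn⟩).ne' this
    · exact h0
  have hdvd : ∀ i, d ∣ a i := fun i => hd ▸ Finset.gcd_dvd (Finset.mem_univ i)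
  set R := MvPolynomial (Fin n) K
  have hlist : (List.ofFn fun i => (∑ j : Fin n, X j ^ a i : R)) =
      (List.ofFn fun i => (∑ j : Fin n, X j ^ (a i / d) : R)).map
        (expand d : R →ₐ[K] R) := by
    rw [List.map_ofFn]
    refine congrArg _ (funext fun i => ?_)
    show (∑ j : Fin n, X j ^ a i : R) = expand d (∑ j : Fin n, X j ^ (a i / d))
    rw [map_sum]
    refine Finset.sum_congr rfl fun j _ => ?_
    rw [map_pow, expand_X, ← pow_mul, Nat.mul_div_cancel' (hdvd i)]
  rw [hlist]
  set bs : List R := List.ofFn fun i => (∑ j : Fin n, X j ^ (a i / d) : R) with hbs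
  -- transfer to AuxPolyExpand
  have step2 : IsRegular R (bs.map (expand d : R →ₐ[K] R)) ↔
      IsRegular (AuxPolyExpand K n d) (bs.map (algebraMap R (AuxPolyExpand K n d))) := by
    refine (AddEquiv.isRegular_congr (e := auxExpandAddEquiv K n d) ?_).symm
    rw [List.forall₂_map_left_iff, List.forall₂_map_right_iff]
    exact List.forall₂_same.mpr fun r _ x => rfl
  rw [step2, aux_isRegular_map_algebraMap_iff,
    ← (auxPiToExpand K n d hd0).isRegular_congr bs]
  have : Nonempty (Fin n → Fin d) := ⟨fun _ => ⟨0, hd0⟩⟩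
  exact aux_isRegular_pi_iff bs
end

section
/- In the polynomial ring S = ℂ[x₁, x₂, x₃, x₄], the power sum p₅ = x₁⁵ + x₂⁵ + x₃⁵ + x₄⁵ lies in the ideal generated by p₁ = x₁ + x₂ + x₃ + x₄ and p₂ = x₁² + x₂² + x₃² + x₄². -/
open MvPolynomial in
theorem stmt_9 :
    (∑ j : Fin 4, X j ^ 5 : MvPolynomial (Fin 4) ℂ) ∈
      Ideal.span {(∑ j : Fin 4, X j ^ 1 : MvPolynomial (Fin 4) ℂ), ∑ j : Fin 4, X j ^ 2} := by
  set S := MvPolynomial (Fin 4) ℂ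
  set a : S := X 0
  set b : S := X 1
  set c : S := X 2
  set d : S := X 3
  set p1 : S := ∑ j : Fin 4, X j ^ 1
  set p2 : S := ∑ j : Fin 4, X j ^ 2
  set p5 : S := ∑ j : Fin 4, X j ^ 5
  set I : Ideal S := Ideal.span {p1, p2}
  have h1 : p1 ∈ I := Ideal.subset_span (Set.mem_insert _ _)
  have h2 : p2 ∈ I := Ideal.subset_span (Set.mem_insert_of_mem _ rfl)
  set A : S := 2 * (a^4+b^4+c^4+d^4) - 2*(a*b*c*d) - (a+b+c+d)*(a^3+b^3+c^3+d^3)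
  set B : S := (a^3+b^3+c^3+d^3) + 2*(a*b*c+a*b*d+a*c*d+b*c*d)
  have key : (2 : S) * p5 = A * p1 + B * p2 := by
    simp only [p1, p2, p5, A, B, a, b, c, d, Fin.sum_univ_four]
    ring
  have hmem : (2 : S) * p5 ∈ I := key ▸ I.add_mem (I.mul_mem_left A h1) (I.mul_mem_left B h2)
  have hu : IsUnit (2 : S) := by
    have := (isUnit_iff_ne_zero.mpr (two_ne_zero : (2:ℂ) ≠ 0)).map (C : ℂ →+* S)
    rwa [map_ofNat] at this
  exact (Ideal.unit_mul_mem_iff_mem I hu).mp hmem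
end

section
/- In S = ℂ[x₁, x₂, x₃, x₄], the power sum p₅ lies in the ideal generated by p₁ and p₃. -/
open MvPolynomial in
theorem stmt_10 :
    (∑ j : Fin 4, X j ^ 5 : MvPolynomial (Fin 4) ℂ) ∈
      Ideal.span {(∑ j : Fin 4, X j ^ 1 : MvPolynomial (Fin 4) ℂ), ∑ j : Fin 4, X j ^ 3} := by
  rw [Ideal.mem_span_pair]
  set p1 : MvPolynomial (Fin 4) ℂ := ∑ j : Fin 4, X j ^ 1 with hp1
  set p3 : MvPolynomial (Fin 4) ℂ := ∑ j : Fin 4, X j ^ 3 with hp3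
  set p2 : MvPolynomial (Fin 4) ℂ := ∑ j : Fin 4, X j ^ 2 with hp2
  set p4 : MvPolynomial (Fin 4) ℂ := ∑ j : Fin 4, X j ^ 4 with hp4
  set e2 : MvPolynomial (Fin 4) ℂ :=
    X 0 * X 1 + X 0 * X 2 + X 0 * X 3 + X 1 * X 2 + X 1 * X 3 + X 2 * X 3 with he2
  set e4 : MvPolynomial (Fin 4) ℂ := X 0 * X 1 * X 2 * X 3 with he4
  have key : 3 * (∑ j : Fin 4, X j ^ 5 : MvPolynomial (Fin 4) ℂ) =
      (3 * p4 - p2 ^ 2 + e2 * p2 - 3 * e4) * p1 + (p2 - 3 * e2) * p3 := by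
    rw [hp1, hp2, hp3, hp4]
    simp only [Fin.sum_univ_four]
    ring
  have h3 : (C (1/3 : ℂ) : MvPolynomial (Fin 4) ℂ) * 3 = 1 := by
    rw [show (3 : MvPolynomial (Fin 4) ℂ) = C 3 from (map_ofNat C 3).symm, ← C_mul]
    norm_num
  refine ⟨C (1/3 : ℂ) * (3 * p4 - p2 ^ 2 + e2 * p2 - 3 * e4),
    C (1/3 : ℂ) * (p2 - 3 * e2), ?_⟩
  calc C (1/3 : ℂ) * (3 * p4 - p2 ^ 2 + e2 * p2 - 3 * e4) * p1
        + C (1/3 : ℂ) * (p2 - 3 * e2) * p3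
      = C (1/3 : ℂ) * ((3 * p4 - p2 ^ 2 + e2 * p2 - 3 * e4) * p1 + (p2 - 3 * e2) * p3) := by
        ring
    _ = C (1/3 : ℂ) * (3 * (∑ j : Fin 4, X j ^ 5 : MvPolynomial (Fin 4) ℂ)) := by rw [key]
    _ = (C (1/3 : ℂ) * 3) * (∑ j : Fin 4, X j ^ 5 : MvPolynomial (Fin 4) ℂ) := by ring
    _ = ∑ j : Fin 4, X j ^ 5 := by rw [h3, one_mul]
end

section
/- If n ≡ 1 (mod 6), then z(z+1)(z²+z+1)² divides the polynomial 1 + z^n + (−1−z)^n in ℚ[z]. -/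
open Polynomial

lemma aux_pow_one_add {R : Type*} [CommRing R] (a e : R) (he : e * e = 0) (k : ℕ) :
    (1 + a * e) ^ k = 1 + (k : R) * a * e := by
  induction k with
  | zero => simp
  | succ k ih =>
    rw [pow_succ, ih]
    have h : (1 + (k : R) * a * e) * (1 + a * e)
        = 1 + ((k : R) + 1) * a * e + (k : R) * a * a * (e * e) := by ring
    rw [h, he]
    push_cast
    ring

lemma aux_key {R : Type*} [CommRing R] (x : R)
    (he : (x ^ 2 + x + 1) * (x ^ 2 + x + 1) = 0) (k : ℕ) :
    1 + x ^ (6 * k + 1) + (-1 - x) ^ (6 * k + 1) = 0 := by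
  have hx6 : x ^ 6 = 1 + (2 * (x - 1)) * (x ^ 2 + x + 1) := by
    linear_combination (x - 1) ^ 2 * he
  have hy6 : (-1 - x) ^ 6 = 1 + (-(2 * (x + 2))) * (x ^ 2 + x + 1) := by
    linear_combination (x + 2) ^ 2 * he
  have hA : x ^ (6 * k) = 1 + (k : R) * (2 * (x - 1)) * (x ^ 2 + x + 1) := by
    rw [pow_mul, hx6]; exact aux_pow_one_add _ _ he k
  have hB : (-1 - x) ^ (6 * k)
      = 1 + (k : R) * (-(2 * (x + 2))) * (x ^ 2 + x + 1) := by
    rw [pow_mul, hy6]; exact aux_pow_one_add _ _ he k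
  rw [pow_succ, pow_succ, hA, hB]
  linear_combination (4 * (k : R)) * he

open Polynomial in
theorem stmt_13 (n : ℕ) (hn : 0 < n) (h : n % 6 = 1) :
    (X * (X + 1) * (X ^ 2 + X + 1) ^ 2 : ℚ[X]) ∣ (1 + X ^ n + (-1 - X) ^ n) := by
  have hodd : Odd n := Nat.odd_iff.mpr (by omega)
  set f : ℚ[X] := 1 + X ^ n + (-1 - X) ^ n with hf
  have hX : (X : ℚ[X]) ∣ f := by
    have hd : (X - C (0 : ℚ)) ∣ f := by
      rw [dvd_iff_isRoot]
      simp [hf, IsRoot, zero_pow hn.ne', hodd.neg_one_pow]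
    simpa using hd
  have hX1 : (X + 1 : ℚ[X]) ∣ f := by
    have hd : (X - C (-1 : ℚ)) ∣ f := by
      rw [dvd_iff_isRoot]
      simp [hf, IsRoot, zero_pow hn.ne', hodd.neg_one_pow]
    simpa [sub_neg_eq_add] using hd
  have hq2 : ((X ^ 2 + X + 1) ^ 2 : ℚ[X]) ∣ f := by
    obtain ⟨k, hk⟩ : ∃ k, n = 6 * k + 1 := ⟨n / 6, by omega⟩
    rw [← Ideal.Quotient.eq_zero_iff_dvd]
    set π := Ideal.Quotient.mk (Ideal.span {((X ^ 2 + X + 1) ^ 2 : ℚ[X])}) with hπ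
    have he : (π X ^ 2 + π X + 1) * (π X ^ 2 + π X + 1) = 0 := by
      have h1 : π ((X ^ 2 + X + 1) * (X ^ 2 + X + 1)) = 0 :=
        (Ideal.Quotient.eq_zero_iff_dvd _ _).mpr ⟨1, by ring⟩
      simpa only [map_mul, map_add, map_pow, map_one] using h1
    have hmap : π f = 1 + π X ^ n + (-1 - π X) ^ n := by
      simp only [hf, map_add, map_pow, map_sub, map_neg, map_one]
    rw [hmap, hk]
    exact aux_key (π X) he k
  have c1 : IsCoprime (X : ℚ[X]) (X + 1) := ⟨-1, 1, by ring⟩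
  have c2 : IsCoprime (X : ℚ[X]) (X ^ 2 + X + 1) := ⟨-(X + 1), 1, by ring⟩
  have c3 : IsCoprime (X + 1 : ℚ[X]) (X ^ 2 + X + 1) := ⟨-X, 1, by ring⟩
  exact ((c2.mul_left c3).pow_right.mul_dvd (c1.mul_dvd hX hX1) hq2)
end

section
/- If n ≡ 3 (mod 6), then z(z+1) divides 1 + z^n + (−1−z)^n, and (z² + z + 1) does not divide 1 + z^n + (−1−z)^n in ℚ[z]. -/
open Polynomial in
theorem stmt_14 (n : ℕ) (hn : 0 < n) (h : n % 6 = 3) :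
    ((X * (X + 1) : ℚ[X]) ∣ (1 + X ^ n + (-1 - X) ^ n)) ∧
    ¬ ((X ^ 2 + X + 1 : ℚ[X]) ∣ (1 + X ^ n + (-1 - X) ^ n)) := by
  have hodd : Odd n := Nat.odd_iff.mpr (by omega)
  obtain ⟨m, hm⟩ : ∃ m, n = 3 * m := ⟨n / 3, by omega⟩
  constructor
  · have h1 : (X : ℚ[X]) ∣ (1 + X ^ n + (-1 - X) ^ n) := by
      have := (Polynomial.dvd_iff_isRoot (p := (1 + X ^ n + (-1 - X) ^ n : ℚ[X]))
        (a := 0)).mpr (by simp [IsRoot, zero_pow hn.ne', hodd.neg_one_pow])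
      simpa using this
    have h2 : (X + 1 : ℚ[X]) ∣ (1 + X ^ n + (-1 - X) ^ n) := by
      have := (Polynomial.dvd_iff_isRoot (p := (1 + X ^ n + (-1 - X) ^ n : ℚ[X]))
        (a := -1)).mpr (by simp [IsRoot, zero_pow hn.ne', hodd.neg_one_pow])
      have e : (X - C (-1) : ℚ[X]) = X + 1 := by simp [sub_neg_eq_add]
      rwa [e] at this
    have hc : IsCoprime (X : ℚ[X]) (X + 1) := ⟨-1, 1, by ring⟩
    exact hc.mul_dvd h1 h2
  · intro hdvd
    have e1 : (X ^ 2 + X + 1 : ℚ[X]) ∣ X ^ n - 1 := by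
      have h3 : (X ^ 2 + X + 1 : ℚ[X]) ∣ X ^ 3 - 1 := ⟨X - 1, by ring⟩
      refine h3.trans ?_
      have := sub_dvd_pow_sub_pow ((X : ℚ[X]) ^ 3) 1 m
      rw [hm, pow_mul]
      simpa using this
    have e2 : (X ^ 2 + X + 1 : ℚ[X]) ∣ (-1 - X) ^ n - 1 := by
      have h3 : (X ^ 2 + X + 1 : ℚ[X]) ∣ (-1 - X) ^ 3 - 1 := ⟨-(X + 2), by ring⟩
      refine h3.trans ?_
      have := sub_dvd_pow_sub_pow ((-1 - X : ℚ[X]) ^ 3) 1 m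
      rw [hm, pow_mul]
      simpa using this
    have h3 : (X ^ 2 + X + 1 : ℚ[X]) ∣ (3 : ℚ[X]) := by
      have : (3 : ℚ[X]) = (1 + X ^ n + (-1 - X) ^ n) - (X ^ n - 1) - ((-1 - X) ^ n - 1) := by
        ring
      rw [this]
      exact (hdvd.sub e1).sub e2
    have hdeg : (X ^ 2 + X + 1 : ℚ[X]).degree ≤ (3 : ℚ[X]).degree :=
      Polynomial.degree_le_of_dvd h3 (by norm_num)
    have hd1 : (X ^ 2 + X + 1 : ℚ[X]).degree = 2 := by compute_degree!
    have hd2 : (3 : ℚ[X]).degree = 0 := by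
      rw [show (3 : ℚ[X]) = C 3 from (map_ofNat Polynomial.C 3).symm]
      exact Polynomial.degree_C (by norm_num)
    rw [hd1, hd2] at hdeg
    exact absurd hdeg (by norm_num)
end
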